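/- Let T be a finite tree (a connected acyclic graph) with edge set E. Then E can be partitioned into blocks such that every block has size 1 or 2, every block of size 2 consists of two edges sharing a common vertex, and at most one block has size 1 (in particular, if |E| is even then every block has size exactly 2). -/

import Mathlib

open Finset

lemma treeAux {V : Type*} [DecidableEq V] (r : V) (p : V → V) (d : V → ℕ)
    (hd : ∀ v, v ≠ r → d v = d (p v) + 1) :
    ∀ (n : ℕ) (S : Finset V), S.card ≤ n → (∀ v ∈ S, v ≠ r → p v ∈ S) →
    ∃ P : Finset (Finset V),
      (∀ b ∈ P, b ⊆ S.erase r) ∧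
      (∀ b ∈ P, b.card = 1 ∨ b.card = 2) ∧
      (P : Set (Finset V)).PairwiseDisjoint id ∧
      P.biUnion id = S.erase r ∧
      (∀ b ∈ P, b.card = 2 → ∃ v w, v ≠ w ∧ b = {v, w} ∧ (p v = p w ∨ p v = w)) ∧
      (P.filter (fun b => b.card = 1)).card ≤ 1 := by
  intro n
  induction n with
  | zero =>
    intro S hcard _
    refine ⟨∅, by simp, by simp, by simp, ?_, by simp, by simp⟩
    have : S = ∅ := Finset.card_eq_zero.mp (Nat.le_zero.mp hcard)
    simp [this]
  | succ n ih =>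
    intro S hcard hclosed
    by_cases hE : (S.erase r).Nonempty
    · obtain ⟨v, hver, hmax⟩ := Finset.exists_max_image (S.erase r) d hE
      obtain ⟨hvr, hvS⟩ := Finset.mem_erase.mp hver
      have huS : p v ∈ S := hclosed v hvS hvr
      have hdv : d v = d (p v) + 1 := hd v hvr
      -- no element of S.erase r has parent v
      have hnoc : ∀ x ∈ S.erase r, p x ≠ v := by
        intro x hx hpx
        have h1 := hd x (Finset.mem_erase.mp hx).1
        have h2 := hmax x hx
        rw [hpx] at h1
        omega
      by_cases hsib : ∃ w ∈ S.erase r, w ≠ v ∧ p w = p v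
      · obtain ⟨w, hwer, hwv, hpw⟩ := hsib
        obtain ⟨hwr, hwS⟩ := Finset.mem_erase.mp hwer
        have hdw : d w = d (p v) + 1 := by rw [hd w hwr, hpw]
        set S' := (S.erase v).erase w with hS'
        have hsub : S' ⊆ S := (Finset.erase_subset _ _).trans (Finset.erase_subset _ _)
        have hcard' : S'.card ≤ n := by
          have h1 : (S.erase v).card = S.card - 1 := Finset.card_erase_of_mem hvS
          have h2 : S'.card ≤ (S.erase v).card - 1 := by
            rw [hS', Finset.card_erase_of_mem (Finset.mem_erase.mpr ⟨hwv, hwS⟩)]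
          have h3 : 1 ≤ S.card := Finset.card_pos.mpr ⟨v, hvS⟩
          omega
        have hclosed' : ∀ x ∈ S', x ≠ r → p x ∈ S' := by
          intro x hx hxr
          have hxS : x ∈ S := hsub hx
          have hxv : x ≠ v := (Finset.mem_erase.mp (Finset.mem_erase.mp hx).2).1
          have hxw : x ≠ w := (Finset.mem_erase.mp hx).1
          have hxer : x ∈ S.erase r := Finset.mem_erase.mpr ⟨hxr, hxS⟩
          refine Finset.mem_erase.mpr ⟨?_, Finset.mem_erase.mpr ⟨hnoc x hxer, hclosed x hxS hxr⟩⟩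
          intro hpx
          have h1 := hd x hxr
          have h2 := hmax x hxer
          rw [hpx] at h1
          omega
        obtain ⟨P', h1, h2, h3, h4, h5, h6⟩ := ih S' hcard' hclosed'
        have hblock : ∀ b ∈ P', Disjoint ({v, w} : Finset V) b := by
          intro b hb
          rw [Finset.disjoint_left]
          intro x hx hxb
          have := h1 b hb hxb
          have hxS' : x ∈ S' := Finset.mem_of_mem_erase this
          rcases Finset.mem_insert.mp hx with rfl | hx
          · exact (Finset.mem_erase.mp (Finset.mem_erase.mp hxS').2).1 rfl
          · exact (Finset.mem_erase.mp hxS').1 (Finset.mem_singleton.mp hx)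
        have hnotmem : ({v, w} : Finset V) ∉ P' := by
          intro hmem
          have := hblock _ hmem
          rw [disjoint_self, Finset.bot_eq_empty] at this
          exact (Finset.insert_nonempty v {w}).ne_empty this
        refine ⟨insert {v, w} P', ?_, ?_, ?_, ?_, ?_, ?_⟩
        · intro b hb
          rcases Finset.mem_insert.mp hb with rfl | hb
          · intro x hx
            rcases Finset.mem_insert.mp hx with rfl | hx
            · exact hver
            · rwa [Finset.mem_singleton.mp hx]
          · exact (h1 b hb).trans (fun x hx => Finset.mem_erase.mpr
              ⟨(Finset.mem_erase.mp hx).1, hsub (Finset.mem_of_mem_erase hx)⟩)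
        · intro b hb
          rcases Finset.mem_insert.mp hb with rfl | hb
          · right; rw [Finset.card_insert_of_notMem (Finset.notMem_singleton.mpr (Ne.symm hwv)),
              Finset.card_singleton]
          · exact h2 b hb
        · rw [Finset.coe_insert]
          exact h3.insert (fun b hb _ => hblock b hb)
        · rw [Finset.biUnion_insert, h4]
          ext x
          simp only [Finset.mem_union, Finset.mem_insert, Finset.mem_singleton, Finset.mem_erase,
            hS', id]
          constructor
          · rintro ((rfl | rfl) | ⟨hxr, _, _, hxS⟩)
            · exact ⟨hvr, hvS⟩
            · exact ⟨hwr, hwS⟩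
            · exact ⟨hxr, hxS⟩
          · rintro ⟨hxr, hxS⟩
            by_cases hxv : x = v
            · exact Or.inl (Or.inl hxv)
            by_cases hxw : x = w
            · exact Or.inl (Or.inr hxw)
            · exact Or.inr ⟨hxr, hxw, hxv, hxS⟩
        · intro b hb hb2
          rcases Finset.mem_insert.mp hb with rfl | hb
          · exact ⟨v, w, Ne.symm hwv, rfl, Or.inl hpw.symm⟩
          · exact h5 b hb hb2
        · rw [Finset.filter_insert]
          have : ¬ ({v, w} : Finset V).card = 1 := by
            rw [Finset.card_insert_of_notMem (Finset.notMem_singleton.mpr (Ne.symm hwv)),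
              Finset.card_singleton]
            omega
          rw [if_neg this]
          exact h6
      · by_cases hur : p v = r
        · -- the only edge left is the root edge {v, r}; S.erase r = {v}
          have hT : ∀ x ∈ S.erase r, x = v := by
            by_contra hcon
            push_neg at hcon
            have hTne : ((S.erase r).filter (fun x => x ≠ v)).Nonempty := by
              obtain ⟨x, hx, hxv⟩ := hcon
              exact ⟨x, Finset.mem_filter.mpr ⟨hx, hxv⟩⟩
            obtain ⟨x, hxT, hmin⟩ := Finset.exists_min_image _ d hTne
            obtain ⟨hxer, hxv⟩ := Finset.mem_filter.mp hxT
            obtain ⟨hxr, hxS⟩ := Finset.mem_erase.mp hxer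
            have hpxS : p x ∈ S := hclosed x hxS hxr
            have hpxr : p x ≠ r := fun h => hsib ⟨x, hxer, hxv, by rw [h, hur]⟩
            have hpxer : p x ∈ S.erase r := Finset.mem_erase.mpr ⟨hpxr, hpxS⟩
            have hpxv : p x ≠ v := by
              intro h
              have h1 := hmax x hxer
              have h2 := hd x hxr
              rw [h] at h2; omega
            have hmem : p x ∈ (S.erase r).filter (fun x => x ≠ v) :=
              Finset.mem_filter.mpr ⟨hpxer, hpxv⟩
            have h1 := hmin _ hmem
            have h2 := hd x hxr
            omega
          have hkey : S.erase r = {v} := by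
            apply Finset.eq_singleton_iff_unique_mem.mpr ⟨hver, hT⟩
          refine ⟨{{v}}, ?_, ?_, ?_, ?_, ?_, ?_⟩
          · intro b hb
            rw [Finset.mem_singleton.mp hb, hkey]
          · intro b hb
            rw [Finset.mem_singleton.mp hb]; left; exact Finset.card_singleton v
          · simp
          · rw [hkey]; simp
          · intro b hb h2c
            rw [Finset.mem_singleton.mp hb] at h2c
            simp at h2c
          · exact (Finset.card_filter_le _ _).trans (by simp)
        · -- pair the edge of v with the edge of its parent p v
          set w := p v with hw
          have hwer : w ∈ S.erase r := Finset.mem_erase.mpr ⟨hur, huS⟩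
          obtain ⟨hwr, hwS⟩ := Finset.mem_erase.mp hwer
          have hwv : w ≠ v := by
            intro h
            rw [h] at hdv
            omega
          set S' := (S.erase v).erase w with hS'
          have hsub : S' ⊆ S := (Finset.erase_subset _ _).trans (Finset.erase_subset _ _)
          have hcard' : S'.card ≤ n := by
            have h1 : (S.erase v).card = S.card - 1 := Finset.card_erase_of_mem hvS
            have h2 : S'.card ≤ (S.erase v).card - 1 := by
              rw [hS', Finset.card_erase_of_mem (Finset.mem_erase.mpr ⟨hwv, hwS⟩)]
            have h3 : 1 ≤ S.card := Finset.card_pos.mpr ⟨v, hvS⟩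
            omega
          have hclosed' : ∀ x ∈ S', x ≠ r → p x ∈ S' := by
            intro x hx hxr
            have hxS : x ∈ S := hsub hx
            have hxv : x ≠ v := (Finset.mem_erase.mp (Finset.mem_erase.mp hx).2).1
            have hxw : x ≠ w := (Finset.mem_erase.mp hx).1
            have hxer : x ∈ S.erase r := Finset.mem_erase.mpr ⟨hxr, hxS⟩
            refine Finset.mem_erase.mpr ⟨?_, Finset.mem_erase.mpr ⟨hnoc x hxer, hclosed x hxS hxr⟩⟩
            intro hpx
            exact hsib ⟨x, hxer, hxv, hpx⟩
          obtain ⟨P', h1, h2, h3, h4, h5, h6⟩ := ih S' hcard' hclosed'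
          have hblock : ∀ b ∈ P', Disjoint ({v, w} : Finset V) b := by
            intro b hb
            rw [Finset.disjoint_left]
            intro x hx hxb
            have hxe := h1 b hb hxb
            have hxS' : x ∈ S' := Finset.mem_of_mem_erase hxe
            rcases Finset.mem_insert.mp hx with rfl | hx
            · exact (Finset.mem_erase.mp (Finset.mem_erase.mp hxS').2).1 rfl
            · exact (Finset.mem_erase.mp hxS').1 (Finset.mem_singleton.mp hx)
          refine ⟨insert {v, w} P', ?_, ?_, ?_, ?_, ?_, ?_⟩
          · intro b hb
            rcases Finset.mem_insert.mp hb with rfl | hb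
            · intro x hx
              rcases Finset.mem_insert.mp hx with rfl | hx
              · exact hver
              · rwa [Finset.mem_singleton.mp hx]
            · exact (h1 b hb).trans (fun x hx => Finset.mem_erase.mpr
                ⟨(Finset.mem_erase.mp hx).1, hsub (Finset.mem_of_mem_erase hx)⟩)
          · intro b hb
            rcases Finset.mem_insert.mp hb with rfl | hb
            · right
              rw [Finset.card_insert_of_notMem (Finset.notMem_singleton.mpr (Ne.symm hwv)),
                Finset.card_singleton]
            · exact h2 b hb
          · rw [Finset.coe_insert]
            exact h3.insert (fun b hb _ => hblock b hb)
          · rw [Finset.biUnion_insert, h4]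
            ext x
            simp only [Finset.mem_union, Finset.mem_insert, Finset.mem_singleton, Finset.mem_erase,
              hS', id]
            constructor
            · rintro ((rfl | rfl) | ⟨hxr, _, _, hxS⟩)
              · exact ⟨hvr, hvS⟩
              · exact ⟨hwr, hwS⟩
              · exact ⟨hxr, hxS⟩
            · rintro ⟨hxr, hxS⟩
              by_cases hxv : x = v
              · exact Or.inl (Or.inl hxv)
              by_cases hxw : x = w
              · exact Or.inl (Or.inr hxw)
              · exact Or.inr ⟨hxr, hxw, hxv, hxS⟩
          · intro b hb hb2
            rcases Finset.mem_insert.mp hb with rfl | hb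
            · exact ⟨v, w, Ne.symm hwv, rfl, Or.inr rfl⟩
            · exact h5 b hb hb2
          · rw [Finset.filter_insert]
            have hc2 : ¬ ({v, w} : Finset V).card = 1 := by
              rw [Finset.card_insert_of_notMem (Finset.notMem_singleton.mpr (Ne.symm hwv)),
                Finset.card_singleton]
              omega
            rw [if_neg hc2]
            exact h6
    · refine ⟨∅, by simp, by simp, by simp, ?_, by simp, by simp⟩
      rw [Finset.not_nonempty_iff_eq_empty] at hE
      simp [hE]


/-- The edge set of a finite tree can be partitioned into blocks of size `1` or `2`,
where every size-`2` block consists of two edges sharing a common vertex, and at most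
one block has size `1`. -/
theorem tree_edge_partition_into_adjacent_pairs
    {V : Type*} [Fintype V] [DecidableEq V]
    (G : SimpleGraph V) [DecidableRel G.Adj] (hT : G.IsTree) :
    ∃ P : Finset (Finset (Sym2 V)),
      (∀ b ∈ P, b ⊆ G.edgeFinset) ∧
      (∀ b ∈ P, b.card = 1 ∨ b.card = 2) ∧
      (P : Set (Finset (Sym2 V))).PairwiseDisjoint id ∧
      P.biUnion id = G.edgeFinset ∧
      (∀ b ∈ P, b.card = 2 → ∃ v : V, ∀ e ∈ b, v ∈ e) ∧
      (P.filter (fun b => b.card = 1)).card ≤ 1 := by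
  classical
  have hne : Nonempty V := hT.isConnected.nonempty
  obtain ⟨r⟩ := hne
  have hup := hT.existsUnique_path
  set pa : ∀ v : V, G.Walk v r := fun v => (hup v r).choose with hpadef
  have hpa : ∀ v, (pa v).IsPath := fun v => (hup v r).choose_spec.1
  have hpaU : ∀ (v : V) (q : G.Walk v r), q.IsPath → q = pa v :=
    fun v q hq => (hup v r).choose_spec.2 q hq
  set p : V → V := fun v => (pa v).getVert 1 with hpdef
  set d : V → ℕ := fun v => (pa v).length with hddef
  have hnil : ∀ v : V, v ≠ r → ¬ (pa v).Nil := fun v h => SimpleGraph.Walk.not_nil_of_ne h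
  have htail : ∀ v : V, v ≠ r → (pa v).tail = pa (p v) := fun v h =>
    hpaU (p v) (pa v).tail (hpa v).tail
  have hd : ∀ v : V, v ≠ r → d v = d (p v) + 1 := by
    intro v h
    have hlen := SimpleGraph.Walk.length_tail_add_one (hnil v h)
    rw [htail v h] at hlen
    simp only [hddef]
    omega
  have hadj : ∀ v : V, v ≠ r → G.Adj v (p v) := fun v h => (pa v).adj_snd (hnil v h)
  have hcover : ∀ a b : V, G.Adj a b → (a ≠ r ∧ p a = b) ∨ (b ≠ r ∧ p b = a) := by
    intro a b hab
    by_cases hb : b ∈ (pa a).support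
    · left
      have har : a ≠ r := by
        intro heq
        have hcopy : ((SimpleGraph.Walk.nil : G.Walk r r).copy heq.symm rfl) = pa a :=
          hpaU a _ (by simp)
        rw [← hcopy] at hb
        simp only [SimpleGraph.Walk.support_copy, SimpleGraph.Walk.mem_support_nil_iff] at hb
        rw [heq, hb] at hab
        exact G.loopless.irrefl r hab
      refine ⟨har, ?_⟩
      have hsingle : ((pa a).takeUntil b hb) = SimpleGraph.Walk.cons hab SimpleGraph.Walk.nil :=
        (hT.existsUnique_path a b).unique ((hpa a).takeUntil hb)
          (by simp [SimpleGraph.Walk.cons_isPath_iff, hab.ne])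
      have hspec := (pa a).take_spec hb
      rw [hsingle, SimpleGraph.Walk.cons_append, SimpleGraph.Walk.nil_append] at hspec
      show (pa a).getVert 1 = b
      rw [← hspec]; simp
    · right
      have hbr : b ≠ r := fun h => hb (h ▸ SimpleGraph.Walk.end_mem_support (pa a))
      refine ⟨hbr, ?_⟩
      have hcons : SimpleGraph.Walk.cons hab.symm (pa a) = pa b := hpaU b _ ((hpa a).cons hb)
      show (pa b).getVert 1 = a
      rw [← hcons]; simp
  have hinj : ∀ a b : V, a ≠ r → b ≠ r → s(a, p a) = s(b, p b) → a = b := by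
    intro a b ha hb h
    rw [Sym2.eq_iff] at h
    rcases h with ⟨h1, _⟩ | ⟨h1, h2⟩
    · exact h1
    · have da := hd a ha
      have db := hd b hb
      rw [h2] at da
      rw [← h1] at db
      omega
  have hcov2 : G.edgeFinset = (Finset.univ.erase r).image (fun v => s(v, p v)) := by
    ext e
    induction e with
    | _ a b =>
      simp only [SimpleGraph.mem_edgeFinset, SimpleGraph.mem_edgeSet, Finset.mem_image,
        Finset.mem_erase, Finset.mem_univ, and_true]
      constructor
      · intro hab
        rcases hcover a b hab with ⟨h1, h2⟩ | ⟨h1, h2⟩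
        · exact ⟨a, h1, by rw [h2]⟩
        · exact ⟨b, h1, by rw [h2, Sym2.eq_swap]⟩
      · rintro ⟨v, hvr, hve⟩
        have hmem : s(v, p v) ∈ G.edgeSet := (G.mem_edgeSet).mpr (hadj v hvr)
        rw [hve] at hmem
        exact hmem
  obtain ⟨P, h1, h2, h3, h4, h5, h6⟩ := treeAux r p d hd (Finset.univ.card) Finset.univ le_rfl
    (fun v _ _ => Finset.mem_univ _)
  set f : V → Sym2 V := fun v => s(v, p v) with hfdef
  have hbr : ∀ b ∈ P, ∀ x ∈ b, x ≠ r := fun b hb x hx => (Finset.mem_erase.mp (h1 b hb hx)).1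
  have hfinj : ∀ b ∈ P, Set.InjOn f b := fun b hb x hx y hy h =>
    hinj x y (hbr b hb x hx) (hbr b hb y hy) h
  have hcardim : ∀ b ∈ P, (b.image f).card = b.card := fun b hb =>
    Finset.card_image_of_injOn (hfinj b hb)
  refine ⟨P.image (fun b => b.image f), ?_, ?_, ?_, ?_, ?_, ?_⟩
  · intro b' hb'
    obtain ⟨b, hb, rfl⟩ := Finset.mem_image.mp hb'
    intro e he
    obtain ⟨x, hx, rfl⟩ := Finset.mem_image.mp he
    exact SimpleGraph.mem_edgeFinset.mpr ((G.mem_edgeSet).mpr (hadj x (hbr b hb x hx)))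
  · intro b' hb'
    obtain ⟨b, hb, rfl⟩ := Finset.mem_image.mp hb'
    rw [hcardim b hb]
    exact h2 b hb
  · intro b1 hb1 b2 hb2 hneq
    simp only [Finset.coe_image, Set.mem_image, Finset.mem_coe] at hb1 hb2
    obtain ⟨a1, ha1, rfl⟩ := hb1
    obtain ⟨a2, ha2, rfl⟩ := hb2
    have hane : a1 ≠ a2 := fun h => hneq (by rw [h])
    have hdisj : Disjoint a1 a2 := h3 (Finset.mem_coe.mpr ha1) (Finset.mem_coe.mpr ha2) hane
    simp only [Function.onFun, id_eq]
    rw [Finset.disjoint_left]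
    intro e he1 he2
    obtain ⟨x, hx, rfl⟩ := Finset.mem_image.mp he1
    obtain ⟨y, hy, hxy⟩ := Finset.mem_image.mp he2
    have : y = x := hinj y x (hbr a2 ha2 y hy) (hbr a1 ha1 x hx) hxy
    rw [this] at hy
    exact Finset.disjoint_left.mp hdisj hx hy
  · rw [Finset.image_biUnion]
    have : (P.biUnion fun b => b.image f) = (P.biUnion id).image f := by
      rw [Finset.biUnion_image]
      rfl
    rw [show (P.biUnion fun a => id (a.image f)) = (P.biUnion fun b => b.image f) from rfl, this,
      h4, ← hcov2]
  · intro b' hb' hb2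
    obtain ⟨b, hb, rfl⟩ := Finset.mem_image.mp hb'
    rw [hcardim b hb] at hb2
    obtain ⟨v, w, hvw, rfl, hcond⟩ := h5 b hb hb2
    refine ⟨p v, ?_⟩
    intro e he
    obtain ⟨x, hx, rfl⟩ := Finset.mem_image.mp he
    rcases Finset.mem_insert.mp hx with rfl | hx
    · simp [hfdef]
    · rw [Finset.mem_singleton.mp hx]
      rcases hcond with h | h
      · rw [hfdef]
        simp only
        rw [h]
        simp
      · rw [hfdef]
        simp only
        rw [h]
        simp
  · have hsub : (P.image (fun b => b.image f)).filter (fun b => b.card = 1) ⊆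
        (P.filter (fun b => b.card = 1)).image (fun b => b.image f) := by
      intro b' hb'
      obtain ⟨hb'mem, hb'card⟩ := Finset.mem_filter.mp hb'
      obtain ⟨b, hb, rfl⟩ := Finset.mem_image.mp hb'mem
      exact Finset.mem_image.mpr ⟨b, Finset.mem_filter.mpr ⟨hb, by rw [← hcardim b hb]; exact hb'card⟩, rfl⟩
    calc ((P.image (fun b => b.image f)).filter (fun b => b.card = 1)).card
        ≤ ((P.filter (fun b => b.card = 1)).image (fun b => b.image f)).card :=
          Finset.card_le_card hsub
      _ ≤ (P.filter (fun b => b.card = 1)).card := Finset.card_image_le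
      _ ≤ 1 := h6
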